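/- Define rational-valued functions r_xx, r_xy, r_xyy on pairs (k,ℓ) with k ≥ 2, 0 ≤ ℓ < k by: r_xx(3,0) = 1/5, r_xx(3,ℓ) = 1/3 for ℓ = 1,2; r_xx(k,0) = 1/C(k+2,2) + (C(k,2)/C(k+2,2))*r_xx(k-1,0) for k ≥ 4 (using r_xy(k,0) = r_xx(k,0)); r_xx(k,ℓ) = 1/C(k,2) + (C(k-2,2)/C(k,2))*r_xx(k-1,ℓ-1) for k ≥ 4, k > ℓ ≥ 1; r_xy(2,0) = 1/3, r_xy(2,1) = 0, r_xy(k,0) = r_xx(k,0) for k ≥ 3, r_xy(k,ℓ) = (C(k-1,2)/C(k,2))*r_xy(k-1,ℓ-1) for k ≥ 3, k > ℓ ≥ 1; r_xyy(2,0) = r_xyy(2,1) = 1, r_xyy(k,ℓ) = (C(k-1,2)/C(k,2))*r_xyy(k-1,ℓ-1) for k ≥ 3, k > ℓ ≥ 1, with r_xyy(k,0) = r_xx(k,0) for k ≥ 3. Then r_xy(k,0) ≤ 1/(k+2) for all k ≥ 3. -/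

import Mathlib

/-- `C2 n = C(n,2) = n(n-1)/2` as a rational number. -/
def C2 (n : ℕ) : ℚ := (n : ℚ) * ((n : ℚ) - 1) / 2

theorem stmt15 (r_xx r_xy r_xyy : ℕ → ℕ → ℚ)
    (hxx30 : r_xx 3 0 = 1/5) (hxx31 : r_xx 3 1 = 1/3) (hxx32 : r_xx 3 2 = 1/3)
    (hxx0 : ∀ k, 4 ≤ k →
      r_xx k 0 = 1 / C2 (k+2) + (C2 k / C2 (k+2)) * r_xx (k-1) 0)
    (hxxrec : ∀ k ℓ, 4 ≤ k → 1 ≤ ℓ → ℓ < k →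
      r_xx k ℓ = 1 / C2 k + (C2 (k-2) / C2 k) * r_xx (k-1) (ℓ-1))
    (hxy20 : r_xy 2 0 = 1/3) (hxy21 : r_xy 2 1 = 0)
    (hxy0 : ∀ k, 3 ≤ k → r_xy k 0 = r_xx k 0)
    (hxyrec : ∀ k ℓ, 3 ≤ k → 1 ≤ ℓ → ℓ < k →
      r_xy k ℓ = (C2 (k-1) / C2 k) * r_xy (k-1) (ℓ-1))
    (hxyy20 : r_xyy 2 0 = 1) (hxyy21 : r_xyy 2 1 = 1)
    (hxyy0 : ∀ k, 3 ≤ k → r_xyy k 0 = r_xx k 0)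
    (hxyyrec : ∀ k ℓ, 3 ≤ k → 1 ≤ ℓ → ℓ < k →
      r_xyy k ℓ = (C2 (k-1) / C2 k) * r_xyy (k-1) (ℓ-1)) :
    ∀ k, 3 ≤ k → r_xy k 0 ≤ 1 / ((k : ℚ) + 2) := by
  have key : ∀ k, 3 ≤ k → r_xx k 0 ≤ 1 / ((k : ℚ) + 2) := by
    intro k hk
    induction k, hk using Nat.le_induction with
    | base => rw [hxx30]; norm_num
    | succ n hn ih =>
      have h4 : 4 ≤ n + 1 := by omega
      rw [hxx0 (n+1) h4]
      have hsub : n + 1 - 1 = n := by omega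
      rw [hsub]
      have hn3 : (3 : ℚ) ≤ (n : ℚ) := by exact_mod_cast hn
      have hC2pos : (0 : ℚ) < C2 (n+1+2) := by
        simp only [C2]; push_cast; nlinarith
      have hC2pos' : (0 : ℚ) ≤ C2 (n+1) := by
        simp only [C2]; push_cast; nlinarith
      have hcoef : (0 : ℚ) ≤ C2 (n+1) / C2 (n+1+2) := by positivity
      have step : 1 / C2 (n+1+2) + (C2 (n+1) / C2 (n+1+2)) * r_xx n 0
          ≤ 1 / C2 (n+1+2) + (C2 (n+1) / C2 (n+1+2)) * (1 / ((n : ℚ) + 2)) := by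
        gcongr
      refine step.trans ?_
      have hpos2 : (0 : ℚ) < (n : ℚ) + 2 := by linarith
      have hcast : ((n + 1 : ℕ) : ℚ) + 2 = (n : ℚ) + 3 := by push_cast; ring
      rw [hcast]
      set N := (n : ℚ) with hN
      have expand : 1 / C2 (n+1+2) + (C2 (n+1) / C2 (n+1+2)) * (1 / (N + 2))
          = (2*(N+2) + (N+1)*N) / ((N+3)*(N+2)*(N+2)) := by
        have h2 : (N + 2) ≠ 0 := by positivity
        have h3 : (N + 3) ≠ 0 := by positivity
        have hC3 : C2 (n+1+2) = (N+3)*(N+2)/2 := by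
          simp only [C2, hN]; push_cast; ring
        have hC1 : C2 (n+1) = (N+1)*N/2 := by
          simp only [C2, hN]; push_cast; ring
        rw [hC3, hC1]
        field_simp
      rw [expand, div_le_div_iff₀ (by positivity) (by positivity)]
      nlinarith
  intro k hk
  rw [hxy0 k hk]
  exact key k hk
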